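/- Let R be a ring with 1 and let f be a morphism of abelian groups. Suppose that an f-localization functor L_f and an (R ⊗_ℤ f)-localization functor L_{R⊗f} exist on the category of abelian groups (where R ⊗_ℤ f denotes the morphism of abelian groups underlying the tensored map). Then for every left R-module M there is a natural isomorphism of abelian groups L_f(UM) ≅ L_{R⊗f}(UM), where U M denotes the underlying abelian group of M. -/

import Mathlib

open CategoryTheory

/-- An object `X` is `f`-local if precomposition with `f` gives a bijection
`C(B, X) → C(A, X)`. -/
def IsLocalWrt {C : Type*} [Category C] {A B : C} (f : A ⟶ B) (X : C) : Prop :=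
  Function.Bijective (fun g : B ⟶ X => f ≫ g)

/-- A morphism `g` is an `f`-equivalence if every `f`-local object is orthogonal to `g`. -/
def IsEquivWrt {C : Type*} [Category C] {A B : C} (f : A ⟶ B) {U V : C} (g : U ⟶ V) : Prop :=
  ∀ X : C, IsLocalWrt f X → Function.Bijective (fun h : V ⟶ X => g ≫ h)

/-- A localization (idempotent monad with invertible unit components `L l = l L`) on `C`. -/
structure LocalizationData (C : Type*) [Category C] where
  /-- the localization functor -/
  L : C ⥤ C
  /-- the unit -/
  l : 𝟭 C ⟶ L
  coincide : ∀ X : C, L.map (l.app X) = l.app (L.obj X)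
  isIso : ∀ X : C, IsIso (L.map (l.app X))

/-- An `f`-localization functor: a localization whose local objects (those `X` with `l_X` an
isomorphism) are exactly the `f`-local objects, and whose unit components are
`f`-equivalences. -/
structure FLocalization {C : Type*} [Category C] {A B : C} (f : A ⟶ B)
    extends LocalizationData C where
  local_iff : ∀ X : C, IsIso (l.app X) ↔ IsLocalWrt f X
  unit_isEquiv : ∀ X : C, IsEquivWrt f (l.app X)

/-- The endofunctor `M ↦ R ⊗_ℤ M` on the category of abelian groups, for a ring `R`. -/
noncomputable def tensorFunctor (R : Type) [Ring R] : AddCommGrpCat.{0} ⥤ AddCommGrpCat.{0} where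
  obj M := AddCommGrpCat.of (TensorProduct ℤ R M)
  map f := AddCommGrpCat.ofHom
    (TensorProduct.map (LinearMap.id : R →ₗ[ℤ] R) f.hom.toIntLinearMap).toAddMonoidHom
  map_id X := by
    show AddCommGrpCat.ofHom
      (TensorProduct.map (LinearMap.id : R →ₗ[ℤ] R)
        (AddMonoidHom.toIntLinearMap (AddCommGrpCat.Hom.hom (𝟙 X)))).toAddMonoidHom = _
    rw [show AddMonoidHom.toIntLinearMap (AddCommGrpCat.Hom.hom (𝟙 X)) = (LinearMap.id : _ →ₗ[ℤ] _) from rfl,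
      TensorProduct.map_id]
    rfl
  map_comp f g := by
    show AddCommGrpCat.ofHom
      (TensorProduct.map (LinearMap.id : R →ₗ[ℤ] R)
        (AddMonoidHom.toIntLinearMap (AddCommGrpCat.Hom.hom (f ≫ g)))).toAddMonoidHom = _
    rw [show AddMonoidHom.toIntLinearMap (AddCommGrpCat.Hom.hom (f ≫ g))
        = (AddMonoidHom.toIntLinearMap g.hom).comp (AddMonoidHom.toIntLinearMap f.hom) from rfl]
    rw [show (LinearMap.id : R →ₗ[ℤ] R)
        = (LinearMap.id : R →ₗ[ℤ] R).comp (LinearMap.id : R →ₗ[ℤ] R) from rfl]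
    rw [TensorProduct.map_comp]
    rfl


namespace Aux

variable (R : Type) [Ring R]

lemma bij_conj {α β α' β' : Type*} (e : α ≃ β) (e' : α' ≃ β') (F : α → α') (G : β → β')
    (h : ∀ a, e' (F a) = G (e a)) (hG : Function.Bijective G) : Function.Bijective F := by
  have hF : F = e'.symm ∘ G ∘ e := by
    funext a
    show F a = e'.symm (G (e a))
    rw [← h, Equiv.symm_apply_apply]
  rw [hF]
  exact (e'.symm.bijective.comp hG).comp e.bijective

def homR (X : AddCommGrpCat.{0}) : AddCommGrpCat.{0} := AddCommGrpCat.of (R →+ X)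

def evR (X : AddCommGrpCat.{0}) (r : R) : homR R X ⟶ X :=
  AddCommGrpCat.ofHom (AddMonoidHom.mk' (fun ψ : R →+ X => ψ r) (fun _ _ => rfl))

noncomputable def curryEquiv (C X : AddCommGrpCat.{0}) :
    ((tensorFunctor R).obj C ⟶ X) ≃ (C ⟶ homR R X) where
  toFun γ := AddCommGrpCat.ofHom (AddMonoidHom.mk'
    (fun c => AddMonoidHom.mk' (fun r => γ ((r ⊗ₜ[ℤ] c : TensorProduct ℤ R C)))
      (fun r s => by
        show γ ((r + s) ⊗ₜ[ℤ] c) = γ _ + γ _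
        rw [TensorProduct.add_tmul]; exact map_add (ConcreteCategory.hom γ) _ _))
    (fun c c' => AddMonoidHom.ext fun r => by
      show γ _ = γ _ + γ _
      rw [TensorProduct.tmul_add]; exact map_add (ConcreteCategory.hom γ) _ _))
  invFun β :=
    letI βh : (C : Type) →+ (R →+ (X : Type)) := β.hom
    AddCommGrpCat.ofHom (TensorProduct.liftAddHom (AddMonoidHom.flip βh)
      (fun z r c => by
        show βh c (z • r) = βh (z • c) r
        rw [map_zsmul, map_zsmul βh z c]
        rfl) :
        TensorProduct ℤ R C →+ X)
  left_inv γ := by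
    apply AddCommGrpCat.ext
    intro t
    induction t using TensorProduct.induction_on with
    | zero => simp
    | tmul r c => rfl
    | add x y hx hy => rw [map_add, map_add, hx, hy]
  right_inv β := by
    apply AddCommGrpCat.ext
    intro c
    apply AddMonoidHom.ext
    intro r
    simp only [AddMonoidHom.mk'_apply]
    rfl

variable {A B : AddCommGrpCat.{0}} (f : A ⟶ B)

lemma curry_natural (X : AddCommGrpCat.{0}) (γ : (tensorFunctor R).obj B ⟶ X) :
    curryEquiv R A X ((tensorFunctor R).map f ≫ γ) = f ≫ curryEquiv R B X γ := by
  apply AddCommGrpCat.ext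
  intro a
  apply AddMonoidHom.ext
  intro r
  show γ ((TensorProduct.map LinearMap.id f.hom.toIntLinearMap) (r ⊗ₜ[ℤ] a)) = γ (r ⊗ₜ[ℤ] f a)
  rw [TensorProduct.map_tmul]
  rfl

variable {R} in
lemma comp_add' {X Y Z : AddCommGrpCat.{0}} (u : X ⟶ Y) (g g' : Y ⟶ Z) :
    u ≫ (g + g') = u ≫ g + u ≫ g' := by
  apply AddCommGrpCat.ext
  intro x
  rfl

lemma homR_local_of_local {X : AddCommGrpCat.{0}} (hX : IsLocalWrt f X) :
    IsLocalWrt f (homR R X) := by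
  let E := Equiv.ofBijective (fun g : B ⟶ X => f ≫ g) hX
  constructor
  · intro g g' hgg
    apply AddCommGrpCat.ext
    intro b
    apply AddMonoidHom.ext
    intro r
    have h1 : f ≫ (g ≫ evR R X r) = f ≫ (g' ≫ evR R X r) := by
      rw [← Category.assoc, ← Category.assoc]
      exact congrArg (· ≫ evR R X r) hgg
    have h2 : g ≫ evR R X r = g' ≫ evR R X r := hX.1 h1
    exact ConcreteCategory.congr_hom h2 b
  · intro h
    set gr : R → (B ⟶ X) := fun r => E.symm (h ≫ evR R X r) with hgr
    have hgr' : ∀ r, f ≫ gr r = h ≫ evR R X r := fun r => E.apply_symm_apply (h ≫ evR R X r)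
    have hadd : ∀ r s, gr (r + s) = gr r + gr s := by
      intro r s
      apply hX.1
      show f ≫ gr (r + s) = f ≫ (gr r + gr s)
      rw [hgr' (r + s), comp_add', hgr' r, hgr' s]
      apply AddCommGrpCat.ext
      intro a
      show (show R →+ (X : Type) from h a) (r + s) = _ + _
      rw [map_add]
      rfl
    refine ⟨AddCommGrpCat.ofHom (AddMonoidHom.mk' (fun b => AddMonoidHom.mk' (fun r => gr r b)
      (fun r s => by show gr (r + s) b = _; rw [hadd]; rfl))
      (fun b b' => AddMonoidHom.ext fun r => by
        show gr r (b + b') = gr r b + gr r b'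
        rw [map_add])), ?_⟩
    apply AddCommGrpCat.ext
    intro a
    apply AddMonoidHom.ext
    intro r
    show gr r (f a) = (show R →+ (X : Type) from h a) r
    exact ConcreteCategory.congr_hom (hgr' r) a

lemma tensor_local_of_local {X : AddCommGrpCat.{0}} (hX : IsLocalWrt f X) :
    IsLocalWrt ((tensorFunctor R).map f) X := by
  exact bij_conj (curryEquiv R B X) (curryEquiv R A X) _ _
    (fun γ => curry_natural R f X γ) (homR_local_of_local R f hX)

lemma homR_local_of_tensor_local {X : AddCommGrpCat.{0}}
    (hX : IsLocalWrt ((tensorFunctor R).map f) X) : IsLocalWrt f (homR R X) := by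
  exact bij_conj (curryEquiv R B X).symm (curryEquiv R A X).symm _ _
    (fun β => by
      apply (curryEquiv R A X).injective
      rw [Equiv.apply_symm_apply]
      rw [curry_natural R f X ((curryEquiv R B X).symm β), Equiv.apply_symm_apply]) hX


/-- underlying abelian group of a module -/
abbrev Uo (M : ModuleCat.{0} R) : AddCommGrpCat.{0} :=
  (forget₂ (ModuleCat.{0} R) AddCommGrpCat.{0}).obj M

lemma L_obj_local {C : Type*} [Category C] {A' B' : C} {f' : A' ⟶ B'}
    (Lfl : FLocalization f') (X : C) : IsLocalWrt f' (Lfl.L.obj X) := by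
  have h1 : IsIso (Lfl.l.app (Lfl.L.obj X)) := by
    rw [← Lfl.coincide X]; exact Lfl.isIso X
  exact (Lfl.local_iff _).mp h1

variable (Lfl : FLocalization f) (M : ModuleCat.{0} R)

/-- the canonical map `M → Hom(R, L)`, `m ↦ (r ↦ l (r • m))` -/
def phiM : Uo R M ⟶ homR R (Lfl.L.obj (Uo R M)) :=
  AddCommGrpCat.ofHom (AddMonoidHom.mk'
    (fun m => AddMonoidHom.mk'
      (fun r => Lfl.l.app (Uo R M) ((r • (show M from m) : M)))
      (fun r s => by
        show Lfl.l.app (Uo R M) (((r + s) • (show M from m) : M)) = _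
        rw [add_smul, map_add]))
    (fun m m' => AddMonoidHom.ext fun r => by
      show Lfl.l.app (Uo R M) ((r • (show M from m + m') : M)) = _ + _
      rw [smul_add, map_add]
      rfl))

/-- the extended map `L → Hom(R, L)` -/
noncomputable def lamM : Lfl.L.obj (Uo R M) ⟶ homR R (Lfl.L.obj (Uo R M)) :=
  (Equiv.ofBijective _
    (Lfl.unit_isEquiv (Uo R M) (homR R (Lfl.L.obj (Uo R M)))
      (homR_local_of_local R f (L_obj_local Lfl (Uo R M))))).symm (phiM R f Lfl M)

lemma lamM_l : Lfl.l.app (Uo R M) ≫ lamM R f Lfl M = phiM R f Lfl M :=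
  (Equiv.ofBijective _
    (Lfl.unit_isEquiv (Uo R M) (homR R (Lfl.L.obj (Uo R M)))
      (homR_local_of_local R f (L_obj_local Lfl (Uo R M))))).apply_symm_apply (phiM R f Lfl M)

lemma lamM_l_apply (m : Uo R M) (r : R) :
    (show R →+ ((Lfl.L.obj (Uo R M) : Type)) from lamM R f Lfl M (Lfl.l.app (Uo R M) m)) r
      = Lfl.l.app (Uo R M) ((r • (show M from m) : M)) := by
  have h2 : lamM R f Lfl M (Lfl.l.app (Uo R M) m) = phiM R f Lfl M m :=
    ConcreteCategory.congr_hom (lamM_l R f Lfl M) m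
  exact congrArg (fun ψ => (show R →+ ((Lfl.L.obj (Uo R M) : Type)) from ψ) r) h2

lemma lamM_one (y : Lfl.L.obj (Uo R M)) :
    (show R →+ ((Lfl.L.obj (Uo R M) : Type)) from lamM R f Lfl M y) 1 = y := by
  have h3 : lamM R f Lfl M ≫ evR R (Lfl.L.obj (Uo R M)) 1 = 𝟙 (Lfl.L.obj (Uo R M)) := by
    apply (Lfl.unit_isEquiv (Uo R M) (Lfl.L.obj (Uo R M)) (L_obj_local Lfl (Uo R M))).1
    show Lfl.l.app (Uo R M) ≫ (lamM R f Lfl M ≫ evR R (Lfl.L.obj (Uo R M)) 1)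
        = Lfl.l.app (Uo R M) ≫ 𝟙 _
    rw [← Category.assoc, lamM_l, Category.comp_id]
    apply AddCommGrpCat.ext
    intro m
    show Lfl.l.app (Uo R M) ((1 • (show M from m) : M)) = Lfl.l.app (Uo R M) m
    rw [one_smul]
  exact ConcreteCategory.congr_hom h3 y

lemma key_equiv : IsEquivWrt ((tensorFunctor R).map f) (Lfl.l.app (Uo R M)) := by
  intro X hXRf
  have hHX : IsLocalWrt f (homR R X) := homR_local_of_tensor_local R f hXRf
  have EXbij : Function.Bijective
      (fun h : Lfl.L.obj (Uo R M) ⟶ homR R X => Lfl.l.app (Uo R M) ≫ h) :=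
    Lfl.unit_isEquiv (Uo R M) (homR R X) hHX
  set L' := Lfl.L.obj (Uo R M) with hL'
  constructor
  · intro g g' hgg
    have hgg' : Lfl.l.app (Uo R M) ≫ g = Lfl.l.app (Uo R M) ≫ g' := hgg
    -- hat maps
    let mkhat : (L' ⟶ X) → (L' ⟶ homR R X) := fun g => AddCommGrpCat.ofHom (AddMonoidHom.mk'
      (fun y => AddMonoidHom.mk'
        (fun r => g ((show R →+ (L' : Type) from lamM R f Lfl M y) r))
        (fun r s => by
          show g ((show R →+ (L' : Type) from lamM R f Lfl M y) (r + s)) = _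
          rw [map_add, map_add]))
      (fun y y' => AddMonoidHom.ext fun r => by
        have h4 : lamM R f Lfl M (y + y') = lamM R f Lfl M y + lamM R f Lfl M y' :=
          (lamM R f Lfl M).hom.map_add y y'
        show g ((show R →+ (L' : Type) from lamM R f Lfl M (y + y')) r) = _
        rw [h4]
        show g ((show R →+ (L' : Type) from lamM R f Lfl M y) r
          + (show R →+ (L' : Type) from lamM R f Lfl M y') r) = _
        rw [map_add]
        rfl))
    have hmk : ∀ u u' : L' ⟶ X, Lfl.l.app (Uo R M) ≫ u = Lfl.l.app (Uo R M) ≫ u' →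
        Lfl.l.app (Uo R M) ≫ mkhat u = Lfl.l.app (Uo R M) ≫ mkhat u' := by
      intro u u' huu
      apply AddCommGrpCat.ext
      intro m
      apply AddMonoidHom.ext
      intro r
      show u ((show R →+ (L' : Type) from lamM R f Lfl M (Lfl.l.app (Uo R M) m)) r)
        = u' ((show R →+ (L' : Type) from lamM R f Lfl M (Lfl.l.app (Uo R M) m)) r)
      rw [lamM_l_apply]
      exact ConcreteCategory.congr_hom huu ((r • (show M from m) : M))
    have h6 : mkhat g = mkhat g' := EXbij.1 (hmk g g' hgg')
    apply AddCommGrpCat.ext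
    intro y
    have h7 : mkhat g y = mkhat g' y := ConcreteCategory.congr_hom h6 y
    have h8 := congrArg (fun ψ => (show R →+ (X : Type) from ψ) (1 : R)) h7
    show g y = g' y
    calc g y = g ((show R →+ (L' : Type) from lamM R f Lfl M y) 1) := by rw [lamM_one]
    _ = g' ((show R →+ (L' : Type) from lamM R f Lfl M y) 1) := h8
    _ = g' y := by rw [lamM_one]
  · intro h
    obtain ⟨H, hH⟩ := EXbij.2 (AddCommGrpCat.ofHom (AddMonoidHom.mk'
      (fun m => AddMonoidHom.mk' (fun r => h ((r • (show M from m) : M)))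
        (fun r s => by
          show h (((r + s) • (show M from m) : M)) = _
          rw [add_smul, map_add]))
      (fun m m' => AddMonoidHom.ext fun r => by
        show h ((r • (show M from m + m') : M)) = _ + _
        rw [smul_add, map_add]
        rfl)))
    refine ⟨H ≫ evR R X 1, ?_⟩
    show Lfl.l.app (Uo R M) ≫ (H ≫ evR R X 1) = h
    rw [← Category.assoc]
    rw [show Lfl.l.app (Uo R M) ≫ H = _ from hH]
    apply AddCommGrpCat.ext
    intro m
    show h ((1 • (show M from m) : M)) = h m
    rw [one_smul]

end Aux

/-- For a ring `R`, a morphism `f` of abelian groups, an `f`-localization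
`L_f` and an `(R ⊗ f)`-localization `L_{R ⊗ f}` on abelian groups, there is a natural
isomorphism `L_f (U M) ≅ L_{R ⊗ f} (U M)` for left `R`-modules `M`, where `U` is the
underlying-abelian-group functor. -/
theorem Lf_iso_LRf_on_modules
    (R : Type) [Ring R] {A B : AddCommGrpCat.{0}} (f : A ⟶ B)
    (Lf : FLocalization f) (LRf : FLocalization ((tensorFunctor R).map f)) :
    Nonempty ((forget₂ (ModuleCat.{0} R) AddCommGrpCat.{0}) ⋙ Lf.L ≅
      (forget₂ (ModuleCat.{0} R) AddCommGrpCat.{0}) ⋙ LRf.L) := by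
  have hL1loc : ∀ M : ModuleCat.{0} R,
      IsLocalWrt ((tensorFunctor R).map f) (Lf.L.obj (Aux.Uo R M)) :=
    fun M => Aux.tensor_local_of_local R f (Aux.L_obj_local Lf (Aux.Uo R M))
  have hl1eq : ∀ M : ModuleCat.{0} R,
      IsEquivWrt ((tensorFunctor R).map f) (Lf.l.app (Aux.Uo R M)) :=
    fun M => Aux.key_equiv R f Lf M
  have hL2loc : ∀ M : ModuleCat.{0} R,
      IsLocalWrt ((tensorFunctor R).map f) (LRf.L.obj (Aux.Uo R M)) :=
    fun M => Aux.L_obj_local LRf _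
  have hl2eq : ∀ M : ModuleCat.{0} R,
      IsEquivWrt ((tensorFunctor R).map f) (LRf.l.app (Aux.Uo R M)) :=
    fun M => LRf.unit_isEquiv _
  have hbex : ∀ M : ModuleCat.{0} R, ∃ b : Lf.L.obj (Aux.Uo R M) ⟶ LRf.L.obj (Aux.Uo R M),
      Lf.l.app (Aux.Uo R M) ≫ b = LRf.l.app (Aux.Uo R M) :=
    fun M => (hl1eq M _ (hL2loc M)).2 (LRf.l.app (Aux.Uo R M))
  have haex : ∀ M : ModuleCat.{0} R, ∃ a : LRf.L.obj (Aux.Uo R M) ⟶ Lf.L.obj (Aux.Uo R M),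
      LRf.l.app (Aux.Uo R M) ≫ a = Lf.l.app (Aux.Uo R M) :=
    fun M => (hl2eq M _ (hL1loc M)).2 (Lf.l.app (Aux.Uo R M))
  choose b hb using hbex
  choose a ha using haex
  refine ⟨NatIso.ofComponents (fun M => ⟨b M, a M, ?_, ?_⟩) ?_⟩
  · -- hom_inv_id
    apply (hl1eq M _ (hL1loc M)).1
    show Lf.l.app (Aux.Uo R M) ≫ (b M ≫ a M) = Lf.l.app (Aux.Uo R M) ≫ 𝟙 _
    rw [← Category.assoc, hb M, ha M, Category.comp_id]
  · -- inv_hom_id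
    apply (hl2eq M _ (hL2loc M)).1
    show LRf.l.app (Aux.Uo R M) ≫ (a M ≫ b M) = LRf.l.app (Aux.Uo R M) ≫ 𝟙 _
    rw [← Category.assoc, ha M, hb M, Category.comp_id]
  · -- naturality
    intro M N h
    apply (hl1eq M _ (hL2loc N)).1
    show Lf.l.app (Aux.Uo R M) ≫
        ((forget₂ (ModuleCat.{0} R) AddCommGrpCat.{0} ⋙ Lf.L).map h ≫ b N)
      = Lf.l.app (Aux.Uo R M) ≫
        (b M ≫ (forget₂ (ModuleCat.{0} R) AddCommGrpCat.{0} ⋙ LRf.L).map h)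
    have e1 : Lf.l.app (Aux.Uo R M) ≫
        (Lf.L.map ((forget₂ (ModuleCat.{0} R) AddCommGrpCat.{0}).map h) ≫ b N)
        = (forget₂ (ModuleCat.{0} R) AddCommGrpCat.{0}).map h ≫ LRf.l.app (Aux.Uo R N) := by
      rw [← Category.assoc, ← Lf.l.naturality, Category.assoc, hb N, Functor.id_map]
    have e2 : Lf.l.app (Aux.Uo R M) ≫
        (b M ≫ LRf.L.map ((forget₂ (ModuleCat.{0} R) AddCommGrpCat.{0}).map h))
        = (forget₂ (ModuleCat.{0} R) AddCommGrpCat.{0}).map h ≫ LRf.l.app (Aux.Uo R N) := by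
      rw [← Category.assoc, hb M, ← LRf.l.naturality, Functor.id_map]
    exact e1.trans e2.symm
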